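/- Let H be a complex Hadamard matrix of order n, let 1 ≤ d ≤ n−1, and let S and T be d-element subsets of the row indices and column indices of H respectively. Then |det H[Sᶜ, Tᶜ]| = n^((n−2d)/2) · |det H[S, T]|, where H[S,T] denotes the d×d submatrix of H with rows S and columns T, and Sᶜ, Tᶜ denote the complementary index sets. Consequently the multiset of absolute values of (n−d)×(n−d) minors of H is obtained from the multiset of absolute values of its d×d minors by multiplying every value by n^(n/2−d), with multiplicities preserved. -/

import Mathlib

open Matrix

/-- `H` is a complex Hadamard matrix: unimodular entries and `H Hᴴ = n • I`. -/
def IsCHadamard {n : Type*} [Fintype n] [DecidableEq n] (H : Matrix n n ℂ) : Prop :=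
  (∀ i j, Norm.norm (H i j) = 1) ∧
    H * H.conjTranspose = (Fintype.card n : ℂ) • 1

/-- The number of pairs `(S, T)` of `d`-element sets of row- and column indices such
that the corresponding `d × d` minor of `H` has absolute value `t`. -/
noncomputable def minorCount {n : ℕ} (H : Matrix (Fin n) (Fin n) ℂ) (d : ℕ) (t : ℝ) : ℕ :=
  Nat.card {p : Finset (Fin n) × Finset (Fin n) //
    ∃ (h₁ : p.1.card = d) (h₂ : p.2.card = d),
      Norm.norm (Matrix.det (H.submatrix
        (fun a => (p.1.orderIsoOfFin h₁ a : Fin n))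
        (fun b => (p.2.orderIsoOfFin h₂ b : Fin n)))) = t}

noncomputable def splitEquiv {n d : ℕ} (S : Finset (Fin n)) (hS : S.card = d)
    (hSc : Sᶜ.card = n - d) : Fin d ⊕ Fin (n - d) ≃ Fin n :=
  (Equiv.sumCongr (S.orderIsoOfFin hS).toEquiv
    ((Sᶜ.orderIsoOfFin hSc).toEquiv.trans
      (Equiv.subtypeEquivRight (fun x => Finset.mem_compl)))).trans
    (Equiv.sumCompl (· ∈ S))

lemma key (n d : ℕ) (H : Matrix (Fin n) (Fin n) ℂ) (hH : IsCHadamard H)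
    (hd1 : 1 ≤ d) (hdn : d ≤ n - 1)
    (S T : Finset (Fin n)) (hS : S.card = d) (hT : T.card = d)
    (hSc : Sᶜ.card = n - d) (hTc : Tᶜ.card = n - d) :
    Norm.norm (Matrix.det (H.submatrix
        (fun a => (Sᶜ.orderIsoOfFin hSc a : Fin n))
        (fun b => (Tᶜ.orderIsoOfFin hTc b : Fin n)))) =
      (n : ℝ) ^ ((((n : ℝ) - 2 * d) / 2) : ℝ) *
        Norm.norm (Matrix.det (H.submatrix
          (fun a => (S.orderIsoOfFin hS a : Fin n))
          (fun b => (T.orderIsoOfFin hT b : Fin n)))) := by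
  have hn2 : 2 ≤ n := by omega
  have hdln : d ≤ n := by omega
  set eR := splitEquiv S hS hSc with heR
  set eC := splitEquiv T hT hTc with heC
  set A := H.submatrix (fun a => (S.orderIsoOfFin hS a : Fin n))
      (fun b => (T.orderIsoOfFin hT b : Fin n)) with hA
  set B := H.submatrix (fun a => (S.orderIsoOfFin hS a : Fin n))
      (fun b => (Tᶜ.orderIsoOfFin hTc b : Fin n)) with hB
  set C := H.submatrix (fun a => (Sᶜ.orderIsoOfFin hSc a : Fin n))
      (fun b => (T.orderIsoOfFin hT b : Fin n)) with hC
  set D := H.submatrix (fun a => (Sᶜ.orderIsoOfFin hSc a : Fin n))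
      (fun b => (Tᶜ.orderIsoOfFin hTc b : Fin n)) with hD
  have hMeq : H.submatrix eR eC = fromBlocks A B C D := by
    ext i j
    cases i <;> cases j <;> rfl
  have hM0 : fromBlocks A B C D * (fromBlocks A B C D)ᴴ = (n : ℂ) • 1 := by
    rw [← hMeq, conjTranspose_submatrix, submatrix_mul_equiv, hH.2]
    simp [Fintype.card_fin, Matrix.submatrix_smul, Matrix.submatrix_one_equiv]
  have hM := hM0
  rw [fromBlocks_conjTranspose, fromBlocks_multiply] at hM
  have hMrhs : ((n : ℂ) • 1 : Matrix (Fin d ⊕ Fin (n - d)) (Fin d ⊕ Fin (n - d)) ℂ)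
      = fromBlocks ((n : ℂ) • 1) 0 0 ((n : ℂ) • 1) := by
    rw [← Matrix.fromBlocks_one, Matrix.fromBlocks_smul]
    simp
  rw [hMrhs] at hM
  have h11 : A * Aᴴ + B * Bᴴ = (n : ℂ) • 1 := by
    have := congrArg Matrix.toBlocks₁₁ hM; simpa using this
  have h21 : C * Aᴴ + D * Bᴴ = 0 := by
    have := congrArg Matrix.toBlocks₂₁ hM; simpa using this
  have hprod : fromBlocks A B C D * fromBlocks Aᴴ 0 Bᴴ 1 =
      fromBlocks ((n : ℂ) • 1) B 0 D := by
    rw [fromBlocks_multiply, h11, h21]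
    simp
  have hdet : (fromBlocks A B C D).det * star A.det = ((n : ℂ)) ^ d * D.det := by
    have := congrArg Matrix.det hprod
    rw [det_mul, det_fromBlocks_zero₁₂, det_fromBlocks_zero₂₁, det_conjTranspose,
      det_one, mul_one, det_smul, det_one, mul_one, Fintype.card_fin] at this
    exact this
  have hnpos : (0 : ℝ) < n := by positivity
  have hdetM : Norm.norm (fromBlocks A B C D).det = (n : ℝ) ^ ((n : ℝ) / 2) := by
    have h3 : (fromBlocks A B C D).det * star (fromBlocks A B C D).det = (n : ℂ) ^ n := by
      have := congrArg Matrix.det hM0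
      rw [det_mul, det_conjTranspose, det_smul, det_one, mul_one, Fintype.card_sum,
        Fintype.card_fin, Fintype.card_fin] at this
      rw [this]
      congr 1
      omega
    have h4 : Complex.normSq (fromBlocks A B C D).det = (n : ℝ) ^ n := by
      have := h3
      rw [Complex.star_def, Complex.mul_conj] at this
      exact_mod_cast this
    have h5 : Norm.norm (fromBlocks A B C D).det = Real.sqrt ((n : ℝ) ^ n) := by
      rw [← h4, Complex.norm_def]
    rw [h5, Real.sqrt_eq_rpow, ← Real.rpow_natCast (n : ℝ) n, ← Real.rpow_mul hnpos.le]
    congr 1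
    ring
  have habs : (n : ℝ) ^ ((n : ℝ) / 2) * Norm.norm A.det
      = (n : ℝ) ^ d * Norm.norm D.det := by
    have := congrArg Norm.norm hdet
    rw [norm_mul, norm_mul, norm_pow, Complex.star_def, Complex.norm_conj, hdetM,
      Complex.norm_natCast] at this
    exact this
  have hc : (n : ℝ) ^ ((((n : ℝ) - 2 * d) / 2) : ℝ) * (n : ℝ) ^ d
      = (n : ℝ) ^ ((n : ℝ) / 2) := by
    rw [← Real.rpow_natCast (n : ℝ) d, ← Real.rpow_add hnpos]
    congr 1
    push_cast
    ring
  have hd0 : ((n : ℝ) ^ d) ≠ 0 := by positivity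
  refine mul_left_cancel₀ hd0 ?_
  rw [← habs, ← hc]
  ring

lemma minor_congr {n k : ℕ} (H : Matrix (Fin n) (Fin n) ℂ) {S S' T T' : Finset (Fin n)}
    (hS : S.card = k) (hS' : S'.card = k) (hT : T.card = k) (hT' : T'.card = k)
    (e1 : S = S') (e2 : T = T') :
    H.submatrix (fun a => (S.orderIsoOfFin hS a : Fin n))
        (fun b => (T.orderIsoOfFin hT b : Fin n)) =
      H.submatrix (fun a => (S'.orderIsoOfFin hS' a : Fin n))
        (fun b => (T'.orderIsoOfFin hT' b : Fin n)) := by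
  subst e1; subst e2; rfl

lemma keyc (n d : ℕ) (H : Matrix (Fin n) (Fin n) ℂ) (hH : IsCHadamard H)
    (hd1 : 1 ≤ d) (hdn : d ≤ n - 1)
    (S T : Finset (Fin n)) (hS : S.card = n - d) (hT : T.card = n - d)
    (hSc : Sᶜ.card = d) (hTc : Tᶜ.card = d) :
    Norm.norm (Matrix.det (H.submatrix
        (fun a => (S.orderIsoOfFin hS a : Fin n))
        (fun b => (T.orderIsoOfFin hT b : Fin n)))) =
      (n : ℝ) ^ ((((n : ℝ) - 2 * d) / 2) : ℝ) *
        Norm.norm (Matrix.det (H.submatrix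
          (fun a => (Sᶜ.orderIsoOfFin hSc a : Fin n))
          (fun b => (Tᶜ.orderIsoOfFin hTc b : Fin n)))) := by
  have hS' : Sᶜᶜ.card = n - d := by rw [compl_compl]; exact hS
  have hT' : Tᶜᶜ.card = n - d := by rw [compl_compl]; exact hT
  have h := key n d H hH hd1 hdn Sᶜ Tᶜ hSc hTc hS' hT'
  rw [minor_congr H hS' hS hT' hT (compl_compl S) (compl_compl T)] at h
  exact h

theorem stmt14 (n : ℕ) (H : Matrix (Fin n) (Fin n) ℂ) (hH : IsCHadamard H)
    (d : ℕ) (hd1 : 1 ≤ d) (hdn : d ≤ n - 1) :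
    (∀ (S T : Finset (Fin n)) (hS : S.card = d) (hT : T.card = d)
        (hSc : Sᶜ.card = n - d) (hTc : Tᶜ.card = n - d),
      Norm.norm (Matrix.det (H.submatrix
          (fun a => (Sᶜ.orderIsoOfFin hSc a : Fin n))
          (fun b => (Tᶜ.orderIsoOfFin hTc b : Fin n)))) =
        (n : ℝ) ^ ((((n : ℝ) - 2 * d) / 2) : ℝ) *
          Norm.norm (Matrix.det (H.submatrix
            (fun a => (S.orderIsoOfFin hS a : Fin n))
            (fun b => (T.orderIsoOfFin hT b : Fin n))))) ∧
    (∀ t : ℝ, 0 ≤ t →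
      minorCount H (n - d) ((n : ℝ) ^ ((((n : ℝ) - 2 * d) / 2) : ℝ) * t) =
        minorCount H d t) := by
  have hdln : d ≤ n := by omega
  have hnpos : (0 : ℝ) < n := by
    have : 2 ≤ n := by omega
    positivity
  refine ⟨fun S T hS hT hSc hTc => key n d H hH hd1 hdn S T hS hT hSc hTc, ?_⟩
  intro t ht
  have hcpos : (0 : ℝ) < (n : ℝ) ^ ((((n : ℝ) - 2 * d) / 2) : ℝ) :=
    Real.rpow_pos_of_pos hnpos _
  unfold minorCount
  refine Nat.card_congr ⟨fun p => ⟨(p.1.1ᶜ, p.1.2ᶜ), ?_⟩, fun q => ⟨(q.1.1ᶜ, q.1.2ᶜ), ?_⟩,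
    fun p => Subtype.ext (by simp), fun q => Subtype.ext (by simp)⟩
  · obtain ⟨h₁, h₂, hv⟩ := p.2
    have hc1 : p.1.1ᶜ.card = d := by
      rw [Finset.card_compl, h₁, Fintype.card_fin]; omega
    have hc2 : p.1.2ᶜ.card = d := by
      rw [Finset.card_compl, h₂, Fintype.card_fin]; omega
    refine ⟨hc1, hc2, ?_⟩
    have h := keyc n d H hH hd1 hdn p.1.1 p.1.2 h₁ h₂ hc1 hc2
    rw [hv] at h
    exact (mul_left_cancel₀ hcpos.ne' h.symm)
  · obtain ⟨h₁, h₂, hv⟩ := q.2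
    have hc1 : q.1.1ᶜ.card = n - d := by
      rw [Finset.card_compl, h₁, Fintype.card_fin]
    have hc2 : q.1.2ᶜ.card = n - d := by
      rw [Finset.card_compl, h₂, Fintype.card_fin]
    have hcc1 : q.1.1ᶜᶜ.card = d := by rw [compl_compl]; exact h₁
    have hcc2 : q.1.2ᶜᶜ.card = d := by rw [compl_compl]; exact h₂
    refine ⟨hc1, hc2, ?_⟩
    have h := keyc n d H hH hd1 hdn q.1.1ᶜ q.1.2ᶜ hc1 hc2 hcc1 hcc2
    rw [minor_congr H hcc1 h₁ hcc2 h₂ (compl_compl q.1.1) (compl_compl q.1.2), hv] at h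
    exact h
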